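/- Let u : [a,b] → ℝ be continuous, let v : [a,b] → {−1,+1} be a step function with N jumps at h₁ < ⋯ < h_N separated by at least 2r, let K ⊂ ℝ∖{−1,+1} be closed, and let ρ > 0 be such that (−1−ρ,−1+ρ) ∪ (1−ρ,1+ρ) ⊂ ℝ∖K and inf{ |∫_{ξ₁}^{ξ₂} √(2W(s)) ds| : ξ₁ ∈ K, ξ₂ ∈ I_ρ } > 2Γ, where Γ := 2N max{∫_{1−ρ}^1 √(2W)}, {∫_{−1}^{−1+ρ} √(2W)}. Suppose for each i there exist points x_i^- ∈ (h_i − δ₁/2, h_i) and x_i^+ ∈ (h_i, h_i + δ₁/2) with |u(x_i^±) − v(x_i^±)| < ρ, and suppose P_ε[u] ≤ N c₀ + Γ. Then d(u^{−1}(K), {h₁,…,h_N}) < δ₁/2 in the Hausdorff sense; i.e., every point of u^{−1}(K) lies within δ₁/2 of some h_i. -/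

import Mathlib

open MeasureTheory intervalIntegral

lemma aux_G_hasDerivAt (φ : ℝ → ℝ) (hφ : Continuous φ) (t : ℝ) :
    HasDerivAt (fun t => ∫ s in (0:ℝ)..t, φ s) (φ t) t :=
  integral_hasDerivAt_right (hφ.intervalIntegrable _ _)
    (hφ.stronglyMeasurableAtFilter _ _) hφ.continuousAt

lemma aux_G_sub (φ : ℝ → ℝ) (hφ : Continuous φ) (p q : ℝ) :
    (∫ s in (0:ℝ)..q, φ s) - (∫ s in (0:ℝ)..p, φ s) = ∫ s in p..q, φ s := by
  have := integral_add_adjacent_intervals (a := (0:ℝ)) (b := p) (c := q) (μ := volume)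
    (hφ.intervalIntegrable _ _) (hφ.intervalIntegrable _ _)
  linarith

lemma aux_young (ε : ℝ) (hε : 0 < ε) (c t : ℝ) (hc : 0 ≤ c) :
    Real.sqrt (2 * c) * |t| ≤ ε / 2 * t ^ 2 + c / ε := by
  have h1 : Real.sqrt (2 * c) ^ 2 = 2 * c := Real.sq_sqrt (by linarith)
  have key : 2 * ε * (Real.sqrt (2 * c) * |t|) ≤ ε ^ 2 * t ^ 2 + 2 * c := by
    nlinarith [sq_nonneg (ε * |t| - Real.sqrt (2 * c)), sq_abs t]
  rw [show ε / 2 * t ^ 2 + c / ε = (ε ^ 2 * t ^ 2 + 2 * c) / (2 * ε) by field_simp,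
    le_div_iff₀ (by positivity)]
  linarith

/-- Energy on a subinterval dominates the variation of `G ∘ u` where
`G t = ∫_0^t √(2W)`. -/
lemma aux_key_bound (W : ℝ → ℝ) (hWc : Continuous W) (hW0 : ∀ s, 0 ≤ W s)
    (ε : ℝ) (hε : 0 < ε) (u u' : ℝ → ℝ) (hu : ∀ x, HasDerivAt u (u' x) x)
    (hu' : Continuous u') (p q : ℝ) (hpq : p ≤ q) :
    |∫ s in (u p)..(u q), Real.sqrt (2 * W s)| ≤
      ∫ x in Set.Ioc p q, (ε / 2 * (u' x) ^ 2 + W (u x) / ε) := by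
  set φ : ℝ → ℝ := fun s => Real.sqrt (2 * W s) with hφdef
  have hφ : Continuous φ := Real.continuous_sqrt.comp (continuous_const.mul hWc)
  have hucont : Continuous u := continuous_iff_continuousAt.2 fun x => (hu x).continuousAt
  have hchain : ∀ x, HasDerivAt (fun y => ∫ s in (0:ℝ)..(u y), φ s) (φ (u x) * u' x) x :=
    fun x => (aux_G_hasDerivAt φ hφ (u x)).comp x (hu x)
  have hicont : Continuous fun x => φ (u x) * u' x := (hφ.comp hucont).mul hu'
  have hftc : (∫ s in (0:ℝ)..(u q), φ s) - (∫ s in (0:ℝ)..(u p), φ s)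
      = ∫ x in p..q, φ (u x) * u' x := by
    exact (integral_eq_sub_of_hasDerivAt (fun x _ => hchain x)
      (hicont.intervalIntegrable _ _)).symm
  have h1 : (∫ s in (u p)..(u q), φ s) = ∫ x in p..q, φ (u x) * u' x := by
    rw [← aux_G_sub φ hφ, hftc]
  rw [h1]
  have h2 : |∫ x in p..q, φ (u x) * u' x| ≤ ∫ x in p..q, |φ (u x) * u' x| :=
    intervalIntegral.abs_integral_le_integral_abs hpq
  have h3 : (∫ x in p..q, |φ (u x) * u' x|) ≤
      ∫ x in p..q, (ε / 2 * (u' x) ^ 2 + W (u x) / ε) := by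
    apply intervalIntegral.integral_mono_on hpq
      (hicont.abs.intervalIntegrable _ _)
      (((continuous_const.mul (hu'.pow 2)).add
        ((hWc.comp hucont).div_const ε)).intervalIntegrable _ _)
    intro x _
    rw [abs_mul, abs_of_nonneg (Real.sqrt_nonneg _)]
    exact aux_young ε hε (W (u x)) (u' x) (hW0 (u x))
  rw [← intervalIntegral.integral_of_le hpq]
  exact le_trans h2 h3

/-- Crossing from a `ρ`-neighborhood of `-1` to a `ρ`-neighborhood of `1`
costs at least `c₀` minus the two boundary-layer integrals. -/
lemma aux_pair_bound (φ : ℝ → ℝ) (hφ : Continuous φ) (hφ0 : ∀ s, 0 ≤ φ s)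
    (ρ : ℝ) (hρ : 0 < ρ) (ξ₁ ξ₂ : ℝ)
    (h₁ : ξ₁ ∈ Set.Ioo (-1 - ρ) (-1 + ρ)) (h₂ : ξ₂ ∈ Set.Ioo (1 - ρ) (1 + ρ)) :
    (∫ s in (-1:ℝ)..1, φ s) -
      ((∫ s in (-1:ℝ)..(-1 + ρ), φ s) + (∫ s in (1 - ρ)..1, φ s)) ≤
      |∫ s in ξ₁..ξ₂, φ s| := by
  have hii : ∀ a b : ℝ, IntervalIntegrable φ volume a b := fun a b => hφ.intervalIntegrable a b
  have hsplit : (∫ s in (-1:ℝ)..(-1+ρ), φ s) + (∫ s in (-1+ρ:ℝ)..(1-ρ), φ s)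
      + (∫ s in (1-ρ:ℝ)..1, φ s) = ∫ s in (-1:ℝ)..1, φ s := by
    rw [integral_add_adjacent_intervals (hii _ _) (hii _ _),
      integral_add_adjacent_intervals (hii _ _) (hii _ _)]
  have hmid : (∫ s in (-1:ℝ)..1, φ s) -
      ((∫ s in (-1:ℝ)..(-1 + ρ), φ s) + (∫ s in (1 - ρ)..1, φ s))
      = ∫ s in (-1+ρ:ℝ)..(1-ρ), φ s := by linarith
  rw [hmid]
  rcases le_or_gt 1 ρ with hρ1 | hρ1
  · have hnn : 0 ≤ ∫ s in (1-ρ:ℝ)..(-1+ρ), φ s :=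
      integral_nonneg (by linarith) (fun s _ => hφ0 s)
    rw [integral_symm]
    exact le_trans (by linarith) (abs_nonneg _)
  · have hord1 : ξ₁ ≤ -1 + ρ := le_of_lt h₁.2
    have hord3 : 1 - ρ ≤ ξ₂ := le_of_lt h₂.1
    have hsplit2 : (∫ s in ξ₁..(-1+ρ:ℝ), φ s) + (∫ s in (-1+ρ:ℝ)..(1-ρ), φ s)
        + (∫ s in (1-ρ:ℝ)..ξ₂, φ s) = ∫ s in ξ₁..ξ₂, φ s := by
      rw [integral_add_adjacent_intervals (hii _ _) (hii _ _),
        integral_add_adjacent_intervals (hii _ _) (hii _ _)]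
    have n1 : 0 ≤ ∫ s in ξ₁..(-1+ρ:ℝ), φ s := integral_nonneg hord1 (fun s _ => hφ0 s)
    have n3 : 0 ≤ ∫ s in (1-ρ:ℝ)..ξ₂, φ s := integral_nonneg hord3 (fun s _ => hφ0 s)
    calc (∫ s in (-1+ρ:ℝ)..(1-ρ), φ s) ≤ ∫ s in ξ₁..ξ₂, φ s := by linarith
    _ ≤ |∫ s in ξ₁..ξ₂, φ s| := le_abs_self _

set_option maxHeartbeats 2000000 in
/-- Interface-localization lemma: if the profile `u` comes `ρ`-close to the step
function `v` on both sides of each jump point and its energy exceeds `N c₀` by at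
most `Γ`, then every point where `u` takes values in the closed set
`K ⊆ ℝ ∖ {−1, 1}` lies within `δ₁/2` of some jump point `h i`. -/
theorem stmt19 (a b r δ₁ ε ρ : ℝ) (hab : a < b) (hr : 0 < r)
    (hδ₁ : 0 < δ₁) (hδr : δ₁ < r) (hε : 0 < ε) (hρ : 0 < ρ)
    (N : ℕ) (hN : 0 < N)
    (W : ℝ → ℝ) (hW : ContDiff ℝ 3 W)
    (hW1 : W 1 = 0) (hWm1 : W (-1) = 0) (hW1' : deriv W 1 = 0) (hWm1' : deriv W (-1) = 0)
    (hW1'' : 0 < iteratedDeriv 2 W 1) (hWm1'' : 0 < iteratedDeriv 2 W (-1))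
    (hWpos : ∀ s : ℝ, s ≠ 1 → s ≠ -1 → 0 < W s)
    (c₀ : ℝ) (hc₀ : c₀ = ∫ s in (-1:ℝ)..1, Real.sqrt (2 * W s))
    -- the step function `v` with `N` jumps at `h 0 < h 1 < ⋯ < h (N-1)`
    (h : Fin N → ℝ) (hmono : StrictMono h)
    (hsep : ∀ i j : Fin N, i < j → h i + 2 * r ≤ h j)
    (hin : ∀ i : Fin N, a ≤ h i - r ∧ h i + r ≤ b)
    (v : ℝ → ℝ) (hvpm : ∀ x, v x = 1 ∨ v x = -1)
    (cval : Fin (N + 1) → ℝ) (hcpm : ∀ i, cval i = 1 ∨ cval i = -1)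
    (hjump : ∀ i : Fin N, cval i.castSucc ≠ cval i.succ)
    (hv : ∀ i : Fin (N + 1), ∀ x : ℝ, a < x → x < b →
      (∀ j : Fin N, (j : ℕ) < (i : ℕ) → h j < x) →
      (∀ j : Fin N, (i : ℕ) ≤ (j : ℕ) → x < h j) → v x = cval i)
    -- the closed set `K ⊆ ℝ ∖ {−1, 1}` and the parameter `ρ`
    (K : Set ℝ) (hKclosed : IsClosed K) (hK : K ⊆ ({-1, 1} : Set ℝ)ᶜ)
    (hIρ : Set.Ioo (-1 - ρ) (-1 + ρ) ∪ Set.Ioo (1 - ρ) (1 + ρ) ⊆ Kᶜ)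
    (Γ : ℝ)
    (hΓ : Γ = 2 * N * max (∫ s in (1 - ρ)..1, Real.sqrt (2 * W s))
        (∫ s in (-1:ℝ)..(-1 + ρ), Real.sqrt (2 * W s)))
    (hinf : 2 * Γ < sInf { e : ℝ | ∃ ξ₁ ∈ K,
        ∃ ξ₂ ∈ Set.Ioo (-1 - ρ) (-1 + ρ) ∪ Set.Ioo (1 - ρ) (1 + ρ),
        e = |∫ s in ξ₁..ξ₂, Real.sqrt (2 * W s)| })
    -- the profile `u` (continuous, with derivative `u'`)
    (u u' : ℝ → ℝ) (hu : ∀ x, HasDerivAt u (u' x) x) (hu' : Continuous u')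
    (hpts : ∀ i : Fin N,
      (∃ xm ∈ Set.Ioo (h i - δ₁ / 2) (h i), |u xm - v xm| < ρ) ∧
      (∃ xp ∈ Set.Ioo (h i) (h i + δ₁ / 2), |u xp - v xp| < ρ))
    (henergy : ∫ x in a..b, (ε / 2 * (u' x) ^ 2 + W (u x) / ε) ≤ N * c₀ + Γ) :
    ∀ x ∈ Set.Icc a b, u x ∈ K → ∃ i : Fin N, |x - h i| < δ₁ / 2 := by
  intro x₀ hx₀ hx₀K
  by_contra hcon
  push_neg at hcon
  -- basic positivity / continuity facts
  have hW0 : ∀ s, 0 ≤ W s := by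
    intro s
    by_cases h1 : s = 1
    · rw [h1, hW1]
    by_cases h2 : s = -1
    · rw [h2, hWm1]
    exact (hWpos s h1 h2).le
  have hWc : Continuous W := hW.continuous
  set φ : ℝ → ℝ := fun s => Real.sqrt (2 * W s) with hφdef
  have hφc : Continuous φ := Real.continuous_sqrt.comp (continuous_const.mul hWc)
  have hφ0 : ∀ s, 0 ≤ φ s := fun s => Real.sqrt_nonneg _
  have hc₀' : c₀ = ∫ s in (-1:ℝ)..1, φ s := hc₀
  have hucont : Continuous u := continuous_iff_continuousAt.2 fun x => (hu x).continuousAt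
  set f : ℝ → ℝ := fun x => ε / 2 * (u' x) ^ 2 + W (u x) / ε with hfdef
  have hfc : Continuous f := (continuous_const.mul (hu'.pow 2)).add ((hWc.comp hucont).div_const ε)
  have hf0 : ∀ x, 0 ≤ f x := by
    intro x
    have h1 : 0 ≤ W (u x) / ε := div_nonneg (hW0 (u x)) hε.le
    have h2 : 0 ≤ ε / 2 * (u' x) ^ 2 := by positivity
    simpa [hfdef] using add_nonneg h2 h1
  have henergy' : ∫ x in a..b, f x ≤ N * c₀ + Γ := henergy
  -- choose the sample points
  choose xm hxm hxmρ using fun i => (hpts i).1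
  choose xp hxp hxpρ using fun i => (hpts i).2
  have haxm : ∀ i, a < xm i := fun i => by
    have := (hin i).1; have := (hxm i).1; linarith
  have hxpb : ∀ i, xp i < b := fun i => by
    have := (hin i).2; have := (hxp i).2; linarith
  have hmlt : ∀ i, xm i < xp i := fun i => lt_trans (hxm i).2 (hxp i).1
  have hord : ∀ i j : Fin N, i < j → xp i ≤ xm j := by
    intro i j hij
    have := hsep i j hij
    have := (hxp i).2
    have := (hxm j).1
    linarith
  -- values of v at the sample points
  have hvm : ∀ i, v (xm i) = cval i.castSucc := by
    intro i
    have h1 : a < xm i := haxm i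
    have h2 : xm i < b := by
      have := (hin i).2; have := (hxm i).2; linarith
    refine hv i.castSucc (xm i) h1 h2 ?_ ?_
    · intro j hj
      rw [Fin.coe_castSucc] at hj
      have := hsep j i (Fin.lt_def.2 hj)
      have := (hxm i).1
      linarith
    · intro j hj
      rw [Fin.coe_castSucc] at hj
      have : h i ≤ h j := hmono.monotone (Fin.le_def.2 hj)
      have := (hxm i).2
      linarith
  have hvp : ∀ i, v (xp i) = cval i.succ := by
    intro i
    have h1 : a < xp i := by
      have := (hin i).1; have := (hxp i).1; linarith
    have h2 : xp i < b := hxpb i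
    refine hv i.succ (xp i) h1 h2 ?_ ?_
    · intro j hj
      rw [Fin.val_succ] at hj
      have hji : (j : ℕ) ≤ (i : ℕ) := by omega
      have : h j ≤ h i := hmono.monotone (Fin.le_def.2 hji)
      have := (hxp i).1
      linarith
    · intro j hj
      rw [Fin.val_succ] at hj
      have := hsep i j (Fin.lt_def.2 (by omega))
      have := (hxp i).2
      linarith
  have hum : ∀ i, |u (xm i) - cval i.castSucc| < ρ := fun i => (hvm i) ▸ hxmρ i
  have hup : ∀ i, |u (xp i) - cval i.succ| < ρ := fun i => (hvp i) ▸ hxpρ i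
  -- abbreviations for the boundary-layer integrals
  set A : ℝ := ∫ s in (-1:ℝ)..(-1 + ρ), φ s with hA
  set B : ℝ := ∫ s in (1 - ρ:ℝ)..1, φ s with hB
  have hΓ' : Γ = 2 * N * max B A := hΓ
  -- the pair bound for each interface
  have hpair : ∀ i : Fin N, c₀ - (A + B) ≤ ∫ x in Set.Ioc (xm i) (xp i), f x := by
    intro i
    have hb := aux_key_bound W hWc hW0 ε hε u u' hu hu' (xm i) (xp i) (hmlt i).le
    refine le_trans ?_ hb
    rcases hcpm i.castSucc with hc1 | hc1
    · have hc2 : cval i.succ = -1 := by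
        rcases hcpm i.succ with hc2 | hc2
        · exact absurd (hc1.trans hc2.symm) (hjump i)
        · exact hc2
      have h1 : u (xp i) ∈ Set.Ioo (-1 - ρ) (-1 + ρ) := by
        have := hup i; rw [hc2, abs_lt] at this
        constructor <;> linarith [this.1, this.2]
      have h2 : u (xm i) ∈ Set.Ioo (1 - ρ) (1 + ρ) := by
        have := hum i; rw [hc1, abs_lt] at this
        constructor <;> linarith [this.1, this.2]
      have hpb := aux_pair_bound φ hφc hφ0 ρ hρ (u (xp i)) (u (xm i)) h1 h2
      rw [intervalIntegral.integral_symm (u (xm i)) (u (xp i)), abs_neg] at hpb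
      calc c₀ - (A + B) = (∫ s in (-1:ℝ)..1, φ s) - (A + B) := by rw [hc₀']
        _ ≤ _ := hpb
    · have hc2 : cval i.succ = 1 := by
        rcases hcpm i.succ with hc2 | hc2
        · exact hc2
        · exact absurd (hc1.trans hc2.symm) (hjump i)
      have h1 : u (xm i) ∈ Set.Ioo (-1 - ρ) (-1 + ρ) := by
        have := hum i; rw [hc1, abs_lt] at this
        constructor <;> linarith [this.1, this.2]
      have h2 : u (xp i) ∈ Set.Ioo (1 - ρ) (1 + ρ) := by
        have := hup i; rw [hc2, abs_lt] at this
        constructor <;> linarith [this.1, this.2]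
      have hpb := aux_pair_bound φ hφc hφ0 ρ hρ (u (xm i)) (u (xp i)) h1 h2
      calc c₀ - (A + B) = (∫ s in (-1:ℝ)..1, φ s) - (A + B) := by rw [hc₀']
        _ ≤ _ := hpb
  -- membership in the double interval Iρ near sample points
  have hKset : ∀ y, |u y - v y| < ρ →
      u y ∈ Set.Ioo (-1 - ρ) (-1 + ρ) ∪ Set.Ioo (1 - ρ) (1 + ρ) := by
    intro y hy
    rcases hvpm y with hv1 | hv1 <;> rw [hv1, abs_lt] at hy
    · right; exact ⟨by linarith [hy.1], by linarith [hy.2]⟩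
    · left; exact ⟨by linarith [hy.1], by linarith [hy.2]⟩
  -- the sInf set is bounded below by 0
  have hbdd : BddBelow { e : ℝ | ∃ ξ₁ ∈ K,
      ∃ ξ₂ ∈ Set.Ioo (-1 - ρ) (-1 + ρ) ∪ Set.Ioo (1 - ρ) (1 + ρ),
      e = |∫ s in ξ₁..ξ₂, φ s| } := by
    refine ⟨0, ?_⟩
    rintro e ⟨ξ₁, -, ξ₂, -, rfl⟩
    exact abs_nonneg _
  have hinf' : 2 * Γ < sInf { e : ℝ | ∃ ξ₁ ∈ K,
      ∃ ξ₂ ∈ Set.Ioo (-1 - ρ) (-1 + ρ) ∪ Set.Ioo (1 - ρ) (1 + ρ),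
      e = |∫ s in ξ₁..ξ₂, φ s| } := hinf
  -- the far-from-jumps dichotomy
  have hx0far : ∀ i : Fin N, x₀ ≤ h i - δ₁ / 2 ∨ h i + δ₁ / 2 ≤ x₀ := by
    intro i
    rcases le_abs.mp (hcon i) with h1 | h1
    · right; linarith
    · left; linarith
  -- disjointness helper
  have hIocdisj : ∀ p q p' q' : ℝ, q ≤ p' → Disjoint (Set.Ioc p q) (Set.Ioc p' q') := by
    intro p q p' q' hle
    rw [Set.disjoint_left]
    intro z hz1 hz2
    exact absurd hz2.1 (not_lt.mpr (hz1.2.trans hle))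
  -- find the excursion interval
  obtain ⟨pT, qT, hpqT, hapT, hqTb, hexcinf, hdisj⟩ :
      ∃ p q : ℝ, p ≤ q ∧ a ≤ p ∧ q ≤ b ∧
        sInf { e : ℝ | ∃ ξ₁ ∈ K,
          ∃ ξ₂ ∈ Set.Ioo (-1 - ρ) (-1 + ρ) ∪ Set.Ioo (1 - ρ) (1 + ρ),
          e = |∫ s in ξ₁..ξ₂, φ s| } ≤ |∫ s in (u p)..(u q), φ s| ∧
        ∀ i : Fin N, Disjoint (Set.Ioc p q) (Set.Ioc (xm i) (xp i)) := by
    by_cases hcase : ∃ j : Fin N, h j + δ₁ / 2 ≤ x₀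
    · -- x₀ lies to the right of some jump; take the largest such jump index
      classical
      set Sfin := Finset.univ.filter (fun j : Fin N => h j + δ₁ / 2 ≤ x₀) with hSfin
      have hSne : Sfin.Nonempty := by
        obtain ⟨j, hj⟩ := hcase
        exact ⟨j, by simp [hSfin, hj]⟩
      set i₀ := Sfin.max' hSne with hi₀
      have hi₀mem : h i₀ + δ₁ / 2 ≤ x₀ := by
        have := Sfin.max'_mem hSne
        simpa [hSfin] using this
      have hi₀max : ∀ j : Fin N, h j + δ₁ / 2 ≤ x₀ → j ≤ i₀ := by
        intro j hj
        exact Sfin.le_max' j (by simp [hSfin, hj])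
      refine ⟨xp i₀, x₀, ?_, ?_, hx₀.2, ?_, ?_⟩
      · have := (hxp i₀).2; linarith
      · have := (hin i₀).1; have := (hxp i₀).1; linarith
      · have hmem : u (xp i₀) ∈ Set.Ioo (-1 - ρ) (-1 + ρ) ∪ Set.Ioo (1 - ρ) (1 + ρ) :=
          hKset _ (hxpρ i₀)
        have hle := csInf_le hbdd ⟨u x₀, hx₀K, u (xp i₀), hmem, rfl⟩
        rwa [intervalIntegral.integral_symm (u (xp i₀)) (u x₀), abs_neg] at hle
      · intro i
        rcases le_or_gt i i₀ with hle | hlt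
        · have hxple : xp i ≤ xp i₀ := by
            rcases lt_or_eq_of_le hle with hlt | heq
            · exact (hord i i₀ hlt).trans (hmlt i₀).le
            · rw [heq]
          exact (hIocdisj _ _ _ _ hxple).symm
        · have hnot : ¬ (h i + δ₁ / 2 ≤ x₀) := fun hcontra =>
            absurd (hi₀max i hcontra) (not_le.mpr hlt)
          have hxle : x₀ ≤ h i - δ₁ / 2 := (hx0far i).resolve_right hnot
          have hxmle : x₀ ≤ xm i := by have := (hxm i).1; linarith
          exact hIocdisj _ _ _ _ hxmle
    · -- x₀ lies to the left of all jumps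
      push_neg at hcase
      have hallleft : ∀ j : Fin N, x₀ ≤ h j - δ₁ / 2 := fun j =>
        (hx0far j).resolve_right (not_le.mpr (hcase j))
      set i₀ : Fin N := ⟨0, hN⟩ with hi₀
      refine ⟨x₀, xm i₀, ?_, hx₀.1, ?_, ?_, ?_⟩
      · have := (hxm i₀).1; have := hallleft i₀; linarith
      · have := (hin i₀).2; have := (hxm i₀).2; linarith
      · have hmem : u (xm i₀) ∈ Set.Ioo (-1 - ρ) (-1 + ρ) ∪ Set.Ioo (1 - ρ) (1 + ρ) :=
          hKset _ (hxmρ i₀)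
        exact csInf_le hbdd ⟨u x₀, hx₀K, u (xm i₀), hmem, rfl⟩
      · intro i
        have hii : i₀ ≤ i := by rw [hi₀]; exact Fin.le_def.2 (Nat.zero_le _)
        have hle : xm i₀ ≤ xm i := by
          rcases eq_or_lt_of_le hii with heq | hlt
          · rw [heq]
          · exact ((hmlt i₀).le.trans (hord i₀ i hlt))
        exact hIocdisj _ _ _ _ hle
  -- the family of disjoint intervals
  classical
  set Fam : Option (Fin N) → Set ℝ := fun o =>
    (match o with
      | none => Set.Ioc pT qT
      | some i => Set.Ioc (xm i) (xp i)) with hFam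
  have hFamsub : ∀ o, Fam o ⊆ Set.Icc a b := by
    intro o
    cases o with
    | none =>
      show Set.Ioc pT qT ⊆ Set.Icc a b
      exact Set.Ioc_subset_Icc_self.trans (Set.Icc_subset_Icc hapT hqTb)
    | some i =>
      show Set.Ioc (xm i) (xp i) ⊆ Set.Icc a b
      exact Set.Ioc_subset_Icc_self.trans (Set.Icc_subset_Icc (haxm i).le (hxpb i).le)
  have hfIcc : IntegrableOn f (Set.Icc a b) :=
    hfc.integrableOn_Icc (X := ℝ) (μ := volume) (a := a) (b := b)
  have hFamInt : ∀ o, IntegrableOn f (Fam o) := fun o => hfIcc.mono_set (hFamsub o)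
  have hFammeas : ∀ o : Option (Fin N), MeasurableSet (Fam o) := by
    intro o
    cases o with
    | none => exact measurableSet_Ioc
    | some i => exact measurableSet_Ioc
  have hpw : (↑(Finset.univ : Finset (Option (Fin N))) : Set (Option (Fin N))).Pairwise
      (Function.onFun Disjoint Fam) := by
    intro o1 _ o2 _ hne
    cases o1 with
    | none =>
      cases o2 with
      | none => exact absurd rfl hne
      | some i => exact hdisj i
    | some i =>
      cases o2 with
      | none => exact (hdisj i).symm
      | some j =>
        have hij : i ≠ j := fun hc => hne (by rw [hc])
        rcases hij.lt_or_gt with hlt | hlt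
        · exact hIocdisj _ _ _ _ (hord i j hlt)
        · exact (hIocdisj _ _ _ _ (hord j i hlt)).symm
  have hsumeq := MeasureTheory.integral_biUnion_finset (μ := volume) (f := f)
    Finset.univ (fun o _ => hFammeas o) hpw (fun o _ => hFamInt o)
  have hsub : (⋃ o ∈ (Finset.univ : Finset (Option (Fin N))), Fam o) ⊆ Set.Icc a b :=
    Set.iUnion₂_subset fun o _ => hFamsub o
  have hmonoint : (∫ x in ⋃ o ∈ (Finset.univ : Finset (Option (Fin N))), Fam o, f x)
      ≤ ∫ x in Set.Icc a b, f x :=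
    setIntegral_mono_set hfIcc (ae_of_all _ hf0) (HasSubset.Subset.eventuallyLE hsub)
  -- the total energy bound
  have htot : ∫ x in Set.Icc a b, f x ≤ N * c₀ + Γ := by
    rw [intervalIntegral.integral_of_le hab.le] at henergy'
    rw [MeasureTheory.integral_Icc_eq_integral_Ioc]
    exact henergy'
  -- lower bound for the sum
  have hexc : sInf { e : ℝ | ∃ ξ₁ ∈ K,
      ∃ ξ₂ ∈ Set.Ioo (-1 - ρ) (-1 + ρ) ∪ Set.Ioo (1 - ρ) (1 + ρ),
      e = |∫ s in ξ₁..ξ₂, φ s| } ≤ ∫ x in Fam none, f x :=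
    le_trans hexcinf (aux_key_bound W hWc hW0 ε hε u u' hu hu' pT qT hpqT)
  have hlow : sInf { e : ℝ | ∃ ξ₁ ∈ K,
      ∃ ξ₂ ∈ Set.Ioo (-1 - ρ) (-1 + ρ) ∪ Set.Ioo (1 - ρ) (1 + ρ),
      e = |∫ s in ξ₁..ξ₂, φ s| } + (N : ℝ) * (c₀ - (A + B))
      ≤ ∑ o : Option (Fin N), ∫ x in Fam o, f x := by
    rw [Fintype.sum_option]
    have h2 : (N : ℝ) * (c₀ - (A + B)) ≤ ∑ i : Fin N, ∫ x in Fam (some i), f x := by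
      calc (N : ℝ) * (c₀ - (A + B)) = ∑ _i : Fin N, (c₀ - (A + B)) := by
            rw [Finset.sum_const, Finset.card_univ, Fintype.card_fin, nsmul_eq_mul]
        _ ≤ _ := Finset.sum_le_sum (fun i _ => hpair i)
    exact add_le_add hexc h2
  -- bounding N (A + B) by Γ
  have hAB : (N : ℝ) * (A + B) ≤ Γ := by
    rw [hΓ']
    have h1 : A ≤ max B A := le_max_right _ _
    have h2 : B ≤ max B A := le_max_left _ _
    have h3 : (0 : ℝ) ≤ (N : ℝ) := Nat.cast_nonneg N
    nlinarith
  -- final contradiction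
  have hchain : sInf { e : ℝ | ∃ ξ₁ ∈ K,
      ∃ ξ₂ ∈ Set.Ioo (-1 - ρ) (-1 + ρ) ∪ Set.Ioo (1 - ρ) (1 + ρ),
      e = |∫ s in ξ₁..ξ₂, φ s| } + (N : ℝ) * (c₀ - (A + B)) ≤ N * c₀ + Γ := by
    calc _ ≤ ∑ o : Option (Fin N), ∫ x in Fam o, f x := hlow
      _ = ∫ x in ⋃ o ∈ (Finset.univ : Finset (Option (Fin N))), Fam o, f x := hsumeq.symm
      _ ≤ ∫ x in Set.Icc a b, f x := hmonoint
      _ ≤ N * c₀ + Γ := htot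
  nlinarith [hinf', hchain, hAB]
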